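/- Let x ∈ C_n(q,d,m,r) with d ≥ 2, m ≥ w_{n+1}, and 0 ≤ r < m, and let x′ be obtained from x by deleting c ≤ d symbols. Then the moment of x satisfies: if M(x′) > r then M(x) = r + m, and if M(x′) ≤ r then M(x) = r. -/

import Mathlib

/-- Weight sequence: `W p d i` = w_i(q,d) where p = q-1; w_i = 0 for i ≤ 0 (encoded by
ℕ truncated subtraction together with `W p d 0 = 0`), and w_i = 1 + p·∑_{j=1}^d w_{i-j}
for i ≥ 1. -/
def W (p d : ℕ) : ℕ → ℕ
  | 0 => 0
  | (i+1) => 1 + p * ∑ j ∈ Finset.range d, W p d (i - j)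
decreasing_by exact Nat.lt_succ_of_le (Nat.sub_le i j)

/-- Moment of a word (1-indexed): M(x) = ∑_{i=1}^{n} w_i x_i. -/
def moment (w : ℕ → ℕ) (x : List ℕ) : ℕ :=
  ∑ i ∈ Finset.range x.length, w (i + 1) * x.getD i 0

/-- Deleted word x^{(D)}: delete the symbols at the (1-indexed) positions in D,
keeping the remaining symbols in order. -/
def deleteD (x : List ℕ) (D : Finset ℕ) : List ℕ :=
  ((List.range x.length).filter (fun i => (i + 1) ∉ D)).map (fun i => x.getD i 0)

/-! ### Auxiliary lemmas -/

lemma W_zero (p d : ℕ) : W p d 0 = 0 := by rw [W]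

lemma W_succ (p d i : ℕ) : W p d (i+1) = 1 + p * ∑ j ∈ Finset.range d, W p d (i - j) := by
  rw [W]

lemma W_mono_succ (p d : ℕ) : ∀ i, W p d i ≤ W p d (i+1) := by
  intro i
  induction i using Nat.strong_induction_on with
  | _ i ih =>
    match i with
    | 0 => simp [W_zero]
    | (i+1) =>
      rw [W_succ, W_succ]
      have h : ∑ j ∈ Finset.range d, W p d (i - j) ≤ ∑ j ∈ Finset.range d, W p d (i+1-j) := by
        apply Finset.sum_le_sum
        intro j _
        rcases Nat.lt_or_ge i j with h | h
        · have h0 : i - j = 0 := by omega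
          rw [h0, W_zero]; exact Nat.zero_le _
        · have h2 : i + 1 - j = (i - j) + 1 := by omega
          rw [h2]
          exact ih (i - j) (by omega)
      exact Nat.add_le_add_left (Nat.mul_le_mul_left p h) 1

lemma W_mono (p d : ℕ) {a b : ℕ} (h : a ≤ b) : W p d a ≤ W p d b :=
  monotone_nat_of_le_succ (W_mono_succ p d) h

lemma W_pos (p d i : ℕ) : 1 ≤ W p d (i+1) := by rw [W_succ]; exact Nat.le_add_right 1 _

/-- Partial sums of the weight sequence. -/
def Sw (p d n : ℕ) : ℕ := ∑ i ∈ Finset.range n, W p d (i+1)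

lemma Sw_mono (p d : ℕ) {a b : ℕ} (h : a ≤ b) : Sw p d a ≤ Sw p d b := by
  unfold Sw
  exact Finset.sum_le_sum_of_subset (Finset.range_subset_range.mpr h)

lemma Sw_split (p d n : ℕ) : Sw p d n = Sw p d (n - d) + ∑ j ∈ Finset.range d, W p d (n - j) := by
  rcases Nat.lt_or_ge n d with hnd | hnd
  · have h0 : n - d = 0 := by omega
    rw [h0]
    unfold Sw
    simp only [Finset.range_zero, Finset.sum_empty, zero_add]
    have hsplit : ∑ j ∈ Finset.range d, W p d (n - j)
        = ∑ j ∈ Finset.range n, W p d (n - j) + ∑ j ∈ Finset.Ico n d, W p d (n - j) := by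
      rw [Finset.range_eq_Ico,
        ← Finset.sum_Ico_consecutive _ (Nat.zero_le n) (le_of_lt hnd), ← Finset.range_eq_Ico]
    have hz : ∑ j ∈ Finset.Ico n d, W p d (n - j) = 0 := by
      apply Finset.sum_eq_zero
      intro j hj
      have := (Finset.mem_Ico.mp hj).1
      have h1 : n - j = 0 := by omega
      rw [h1, W_zero]
    rw [hsplit, hz, add_zero]
    rw [← Finset.sum_range_reflect (fun j => W p d (n - j)) n]
    apply Finset.sum_congr rfl
    intro j hj
    have hj' := Finset.mem_range.mp hj
    congr 1
    omega
  · unfold Sw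
    rw [Finset.range_eq_Ico,
      ← Finset.sum_Ico_consecutive _ (Nat.zero_le (n - d)) (Nat.sub_le n d)]
    congr 1
    · rw [Finset.range_eq_Ico]
    rw [Finset.sum_Ico_eq_sum_range]
    have hdd : n - (n - d) = d := by omega
    rw [hdd]
    rw [← Finset.sum_range_reflect (fun j => W p d (n - j)) d]
    apply Finset.sum_congr rfl
    intro j hj
    have hj' := Finset.mem_range.mp hj
    congr 1
    omega

lemma W_lower (p d i : ℕ) (hd : 2 ≤ d) :
    1 + p * (W p d (i+1) + W p d i) ≤ W p d (i+2) := by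
  rw [W_succ p d (i+1)]
  have hsub : ({0, 1} : Finset ℕ) ⊆ Finset.range d := by
    intro j hj
    fin_cases hj <;> simp <;> omega
  have hle : ∑ j ∈ ({0,1} : Finset ℕ), W p d (i+1-j) ≤ ∑ j ∈ Finset.range d, W p d (i+1-j) :=
    Finset.sum_le_sum_of_subset hsub
  rw [Finset.sum_pair (by norm_num : (0:ℕ) ≠ 1)] at hle
  simp only [Nat.sub_zero] at hle
  have : i + 1 - 1 = i := by omega
  rw [this] at hle
  exact Nat.add_le_add_left (Nat.mul_le_mul_left p hle) 1

lemma pS_lt (p d : ℕ) (hp : 1 ≤ p) (hd : 2 ≤ d) : ∀ k, p * Sw p d k < W p d (k+2) := by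
  intro k
  induction k with
  | zero => simp [Sw]; exact W_pos p d 1
  | succ k ih =>
    have hlow := W_lower p d (k+1) hd
    have h1 : p * Sw p d (k+1) = p * Sw p d k + p * W p d (k+1) := by
      unfold Sw; rw [Finset.sum_range_succ]; ring
    have h2 : W p d (k+2) ≤ p * W p d (k+2) := Nat.le_mul_of_pos_left _ hp
    have h3 : k + 1 + 2 = k + 2 + 1 := by omega
    rw [h3] at *
    calc p * Sw p d (k+1) = p * Sw p d k + p * W p d (k+1) := h1
    _ < W p d (k+2) + p * W p d (k+1) := by omega
    _ ≤ p * W p d (k+2) + p * W p d (k+1) := by omega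
    _ < 1 + p * (W p d (k+2) + W p d (k+1)) := by ring_nf; omega
    _ ≤ W p d (k+2+1) := W_lower p d (k+1) hd

lemma pS_lt_two (p d n : ℕ) (hp : 1 ≤ p) (hd : 2 ≤ d) :
    p * Sw p d n + 2 ≤ 2 * W p d (n+1) := by
  rcases Nat.eq_zero_or_pos n with h0 | h0
  · subst h0
    simp [Sw]
    exact W_pos p d 0
  · have hsplit := Sw_split p d n
    have hW : W p d (n+1) = 1 + p * ∑ j ∈ Finset.range d, W p d (n - j) := W_succ p d n
    have h1 : p * Sw p d n + 1 = p * Sw p d (n - d) + W p d (n+1) := by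
      rw [hsplit, hW]; ring
    have h2 : p * Sw p d (n - d) < W p d (n - d + 2) := pS_lt p d hp hd (n - d)
    have h3 : W p d (n - d + 2) ≤ W p d (n + 1) := W_mono p d (by omega)
    omega

lemma sum_getD_eq (l : List ℕ) (f : ℕ → ℕ) :
    ∑ k ∈ Finset.range l.length, f (l.getD k 0) = (l.map f).sum := by
  induction l with
  | nil => simp
  | cons a t ih =>
    rw [List.length_cons, Finset.sum_range_succ']
    simp only [List.getD_cons_succ, List.getD_cons_zero, List.map_cons, List.sum_cons]
    rw [ih]; ring

lemma getD_ge_aux : ∀ (l : List ℕ), l.Pairwise (· < ·) →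
    ∀ b, (∀ y ∈ l, b ≤ y) → ∀ k, k < l.length → b + k ≤ l.getD k 0 := by
  intro l
  induction l with
  | nil => intro _ b _ k hk; simp at hk
  | cons a t ih =>
    intro hp b hb k hk
    rw [List.pairwise_cons] at hp
    match k with
    | 0 => simpa using hb a List.mem_cons_self
    | (k+1) =>
      rw [List.getD_cons_succ]
      have h1 : b + 1 + k ≤ t.getD k 0 := by
        apply ih hp.2 (b+1)
        · intro y hy
          exact Nat.succ_le_of_lt (lt_of_le_of_lt (hb a List.mem_cons_self) (hp.1 y hy))
        · simpa using hk
      omega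

lemma getD_ge (l : List ℕ) (hl : l.Pairwise (· < ·)) (k : ℕ) (hk : k < l.length) :
    k ≤ l.getD k 0 := by
  have := getD_ge_aux l hl 0 (fun y _ => Nat.zero_le y) k hk
  omega

lemma swap_ineq (a b t p : ℕ) (hab : a ≤ b) (htp : t ≤ p) : b*t + p*a ≤ a*t + p*b := by
  obtain ⟨e, rfl⟩ := Nat.exists_eq_add_of_le hab
  obtain ⟨s, rfl⟩ := Nat.exists_eq_add_of_le htp
  ring_nf
  nlinarith [Nat.zero_le (s*e)]

theorem moment_determined (q d n m r c : ℕ) (hq : 2 ≤ q) (hd : 2 ≤ d)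
    (hm : W (q - 1) d (n + 1) ≤ m) (hr : r < m)
    (x : List ℕ) (hlen : x.length = n) (hx : ∀ a ∈ x, a < q)
    (hcode : moment (W (q - 1) d) x % m = r)
    (D : Finset ℕ) (hD : D ⊆ Finset.Icc 1 n) (hcard : D.card = c) (hc : c ≤ d) :
    (r < moment (W (q - 1) d) (deleteD x D) → moment (W (q - 1) d) x = r + m) ∧
    (moment (W (q - 1) d) (deleteD x D) ≤ r → moment (W (q - 1) d) x = r) := by
  subst hlen
  set p := q - 1 with hpdef
  have hp : 1 ≤ p := by omega
  set w := W p d with hwdef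
  set n := x.length with hndef
  set g : ℕ → ℕ := fun i => x.getD i 0 with hgdef
  set l : List ℕ := (List.range n).filter (fun i => (i + 1) ∉ D) with hldef
  set L := l.length with hLdef
  have hdel : deleteD x D = l.map g := rfl
  -- basic facts about l
  have hlsub : l.Sublist (List.range n) := List.filter_sublist
  have hpair : l.Pairwise (· < ·) := List.Pairwise.sublist hlsub List.pairwise_lt_range
  have hnodup : l.Nodup := (List.nodup_range : (List.range n).Nodup).sublist hlsub
  have hltf : l.toFinset = (Finset.range n).filter (fun i => (i + 1) ∉ D) := by
    ext i
    simp [hldef]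
  -- symbols are bounded by p
  have hgle : ∀ i, g i ≤ p := by
    intro i
    rcases Nat.lt_or_ge i x.length with h | h
    · have : g i = x[i] := List.getD_eq_getElem x 0 h
      rw [this]
      have := hx x[i] (List.getElem_mem h)
      omega
    · have : g i = 0 := List.getD_eq_default x 0 h
      omega
  -- length bound : n ≤ L + c
  have hcount : n ≤ L + c := by
    have h1 : l.toFinset.card = L := List.toFinset_card_of_nodup hnodup
    have h2 : ((Finset.range n).filter (fun i => (i + 1) ∉ D)).card
        + ((Finset.range n).filter (fun i => ¬ ((i + 1) ∉ D))).card = n := by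
      rw [Finset.card_filter_add_card_filter_not, Finset.card_range]
    have h3 : ((Finset.range n).filter (fun i => ¬ ((i + 1) ∉ D))).card ≤ c := by
      rw [← hcard]
      apply Finset.card_le_card_of_injOn (fun i => i + 1)
      · intro a ha
        simp only [Finset.coe_filter, Finset.mem_coe, Finset.mem_filter, Set.mem_setOf_eq, not_not] at ha ⊢
        exact ha.2
      · intro a _ b _ hab
        exact Nat.add_right_cancel hab
    rw [hltf] at h1
    omega
  -- notation for the various sums
  set delF := (Finset.range n).filter (fun i => ¬ ((i + 1) ∉ D)) with hdelF
  set A1 := ∑ k ∈ Finset.range L, w (l.getD k 0 + 1) * g (l.getD k 0) with hA1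
  set A2 := ∑ k ∈ Finset.range L, w (k + 1) * g (l.getD k 0) with hA2
  set B1 := ∑ k ∈ Finset.range L, w (k + 1) with hB1
  set B2 := ∑ k ∈ Finset.range L, w (l.getD k 0 + 1) with hB2
  set C1 := ∑ i ∈ delF, w (i + 1) * g i with hC1
  set C2 := ∑ i ∈ delF, w (i + 1) with hC2
  -- the moment of the deleted word is A2
  have hM' : moment w (deleteD x D) = A2 := by
    rw [hdel]
    unfold moment
    rw [List.length_map]
    apply Finset.sum_congr rfl
    intro k hk
    have hkL : k < L := Finset.mem_range.mp hk
    congr 1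
    have hkm : k < (l.map g).length := by simpa using hkL
    rw [List.getD_eq_getElem _ _ hkm, List.getElem_map, ← List.getD_eq_getElem l 0 hkL]
  -- partition identities
  have hpart1 : A1 + C1 = moment w x := by
    unfold moment
    have e1 : A1 = ∑ i ∈ l.toFinset, w (i + 1) * g i := by
      rw [hA1, hLdef, sum_getD_eq l (fun i => w (i + 1) * g i),
        ← List.sum_toFinset _ hnodup]
    rw [e1, hC1, hltf, hdelF]
    exact Finset.sum_filter_add_sum_filter_not _ _ _
  have hpart2 : B2 + C2 = Sw p d n := by
    unfold Sw
    have e1 : B2 = ∑ i ∈ l.toFinset, w (i + 1) := by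
      rw [hB2, hLdef, sum_getD_eq l (fun i => w (i + 1)),
        ← List.sum_toFinset _ hnodup]
    rw [e1, hC2, hltf, hdelF]
    exact Finset.sum_filter_add_sum_filter_not _ _ _
  have hB1S : B1 = Sw p d L := rfl
  -- pointwise facts on kept positions
  have hkpt : ∀ k ∈ Finset.range L, k ≤ l.getD k 0 := by
    intro k hk
    exact getD_ge l hpair k (Finset.mem_range.mp hk)
  -- (a) : A2 ≤ A1
  have ha : A2 ≤ A1 := by
    apply Finset.sum_le_sum
    intro k hk
    exact Nat.mul_le_mul_right _ (W_mono p d (by have := hkpt k hk; omega))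
  -- (b) : the swap inequality, summed
  have hswap : A1 + p * B1 ≤ A2 + p * B2 := by
    rw [hA1, hA2, hB1, hB2, Finset.mul_sum, Finset.mul_sum,
      ← Finset.sum_add_distrib, ← Finset.sum_add_distrib]
    apply Finset.sum_le_sum
    intro k hk
    exact swap_ineq (w (k+1)) (w (l.getD k 0 + 1)) (g (l.getD k 0)) p
      (W_mono p d (by have := hkpt k hk; omega)) (hgle _)
  have hcc : C1 ≤ p * C2 := by
    rw [hC1, hC2, Finset.mul_sum]
    apply Finset.sum_le_sum
    intro i _
    calc w (i + 1) * g i ≤ w (i + 1) * p := Nat.mul_le_mul_left _ (hgle i)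
    _ = p * w (i + 1) := Nat.mul_comm _ _
  -- key inequalities
  have key1 : moment w (deleteD x D) ≤ moment w x := by
    rw [hM', ← hpart1]
    omega
  have key2 : moment w x + p * Sw p d L ≤ moment w (deleteD x D) + p * Sw p d n := by
    rw [hM', ← hpart1, ← hpart2, Nat.mul_add, ← hB1S]
    omega
  have key3 : p * Sw p d n + 1 ≤ p * Sw p d L + w (n + 1) := by
    have hsplit := Sw_split p d n
    have hW : w (n+1) = 1 + p * ∑ j ∈ Finset.range d, W p d (n - j) := W_succ p d n
    have h1 : p * Sw p d n + 1 = p * Sw p d (n - d) + w (n+1) := by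
      rw [hsplit, hW]; ring
    have h2 : Sw p d (n - d) ≤ Sw p d L := Sw_mono p d (by omega)
    have h3 : p * Sw p d (n - d) ≤ p * Sw p d L := Nat.mul_le_mul_left p h2
    omega
  have hMle : moment w x ≤ p * Sw p d n := by
    unfold moment Sw
    rw [Finset.mul_sum]
    apply Finset.sum_le_sum
    intro i _
    calc w (i + 1) * x.getD i 0 ≤ w (i + 1) * p := Nat.mul_le_mul_left _ (hgle i)
    _ = p * w (i + 1) := Nat.mul_comm _ _
  have h2m : moment w x < 2 * m := by
    have hps : p * Sw p d n + 2 ≤ 2 * w (n + 1) := pS_lt_two p d n hp hd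
    have hwm : w (n + 1) ≤ m := hm
    omega
  have hMm : moment w x + 1 ≤ moment w (deleteD x D) + m := by
    have hwm : w (n + 1) ≤ m := hm
    omega
  -- final arithmetic
  have hfin : moment w x = r ∨ moment w x = r + m := by
    have h1 : moment w x % m = r := hcode
    rcases Nat.lt_or_ge (moment w x) m with h | h
    · left
      rw [Nat.mod_eq_of_lt h] at h1
      exact h1
    · right
      rw [Nat.mod_eq_sub_mod h] at h1
      have h2 : moment w x - m < m := by omega
      rw [Nat.mod_eq_of_lt h2] at h1
      omega
  constructor <;> intro hcase <;> rcases hfin with h | h <;> omega
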